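/- Let F be a finite field of odd characteristic and χ a multiplicative character on F with χ⁴ ≠ 𝟙. Then the double character sum B(F, χ) := ∑_{x ∈ F} ∑_{z ∈ F^×} χ(z) · λ(x³ + x²z - 4xz) has absolute value |F| (in any complex embedding). -/

import Mathlib

open Finset
open scoped Classical

/-- Jacobi sum with the sign convention of the paper:
`j_F(χ₁, χ₂) = -∑_{x₁+x₂=1} χ₁(x₁)χ₂(x₂)`. -/
noncomputable def jac {F : Type*} [Field F] [Fintype F]
    (χ₁ χ₂ : MulChar F ℂ) : ℂ :=
  -∑ x : F, χ₁ x * χ₂ (1 - x)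

/-- The double character sum `B(F, χ) = ∑_{x ∈ F} ∑_{z ∈ F^×} χ(z) λ(x³ + x²z - 4xz)`. -/

noncomputable def Bsum (F : Type*) [Field F] [Fintype F]
    (χ lam : F → ℂ) : ℂ :=
  ∑ x : F, ∑ z ∈ Finset.univ.filter (fun z : F => z ≠ 0),
    χ z * lam (x ^ 3 + x ^ 2 * z - 4 * x * z)

attribute [local instance] Fintype.ofFinite

lemma abs_mulChar_eq_one {F : Type*} [Field F] [Fintype F] (χ : MulChar F ℂ) {a : F} (ha : a ≠ 0) :
    ‖χ a‖ = 1 := by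
  have := Complex.norm_eq_one_of_mem_rootsOfUnity (χ.apply_mem_rootsOfUnity (Units.mk0 a ha))
  rwa [MulChar.coe_equivToUnitHom, Units.val_mk0] at this

lemma abs_jacobiSum_eq {F : Type*} [Field F] [Fintype F] (χ φ : MulChar F ℂ)
    (hχ : χ ≠ 1) (hφ : φ ≠ 1) (hχφ : χ * φ ≠ 1) :
    ‖jacobiSum χ φ‖ = Real.sqrt (Fintype.card F) := by
  have hr : ringChar ℂ ≠ ringChar F := by
    rw [ringChar.eq_zero]
    exact (CharP.char_ne_zero_of_finite F (ringChar F)).symm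
  have h := jacobiSum_mul_jacobiSum_inv hr hχ hφ hχφ
  have hc : jacobiSum χ⁻¹ φ⁻¹ = (starRingEnd ℂ) (jacobiSum χ φ) := by
    simp only [jacobiSum, map_sum, map_mul]
    exact Finset.sum_congr rfl fun x _ => by
      rw [← MulChar.star_apply' χ x, ← MulChar.star_apply' φ (1 - x)]; rfl
  rw [hc, Complex.mul_conj] at h
  have h2 : (Complex.normSq (jacobiSum χ φ) : ℝ) = (Fintype.card F : ℝ) := by
    exact_mod_cast congrArg Complex.re h
  rw [Complex.norm_def, h2]


theorem Bsum_abs {F : Type*} [Field F] [Fintype F]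
    (hchar : ringChar F ≠ 2)
    (lam : MulChar F ℂ) (hl2 : lam ^ 2 = 1) (hl1 : lam ≠ 1)
    (χ : MulChar F ℂ) (hχ : χ ^ 4 ≠ 1) :
    ‖Bsum F ⇑χ ⇑lam‖ = (Fintype.card F : ℝ) := by
  classical
  have h2 : (2 : F) ≠ 0 := Ring.two_ne_zero hchar
  have h4 : (4 : F) ≠ 0 := by
    have h : (4 : F) = 2 * 2 := by norm_num
    rw [h]; exact mul_ne_zero h2 h2
  have h8 : (8 : F) ≠ 0 := by
    have h : (8 : F) = 2 * 4 := by norm_num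
    rw [h]; exact mul_ne_zero h2 h4
  have hχ1 : χ ≠ 1 := fun h => hχ (by rw [h]; simp)
  have hχ2 : χ ^ 2 ≠ 1 := fun h => hχ (by rw [show (4:ℕ) = 2*2 by norm_num, pow_mul, h, one_pow])
  have hlinv : lam⁻¹ = lam := by
    rw [inv_eq_iff_mul_eq_one, ← sq, hl2]
  have hχl : χ * lam ≠ 1 := by
    intro h
    have hc : χ = lam⁻¹ := by rw [eq_inv_iff_mul_eq_one]; exact h
    rw [hlinv] at hc
    exact hχ2 (by rw [sq, hc, ← sq, hl2])
  have hlc2 : lam * χ ^ 2 ≠ 1 := by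
    intro h
    have hc : χ ^ 2 = lam⁻¹ := by
      rw [eq_inv_iff_mul_eq_one, mul_comm]; exact h
    rw [hlinv] at hc
    exact hχ (by rw [show (4:ℕ) = 2*2 by norm_num, pow_mul, hc]; exact hl2)
  have hlc1 : (lam * χ ^ 2) * χ⁻¹ ≠ 1 := by
    intro h
    have hc : lam * χ = 1 := by
      rw [mul_assoc, show χ ^ 2 * χ⁻¹ = χ by group] at h
      exact h
    have hc' : χ = lam⁻¹ := by rw [eq_inv_iff_mul_eq_one, mul_comm]; exact hc
    rw [hlinv] at hc'
    exact hχ2 (by rw [sq, hc', ← sq, hl2])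
  have hχinv : χ⁻¹ ≠ 1 := fun h => hχ1 (by rwa [inv_eq_one] at h)
  have hlam0 : lam (0:F) = 0 := lam.map_zero
  have hχ0 : χ (0:F) = 0 := χ.map_zero
  -- the key sum S
  have hS : ∑ u : F, χ u * lam (1 + u) = χ (-1) * jacobiSum χ lam := by
    rw [jacobiSum, mul_sum]
    refine Fintype.sum_bijective (fun u : F => -u) neg_involutive.bijective _ _ fun u => ?_
    have hm : χ (-1) * χ (-u) = χ u := by
      rw [← map_mul, neg_mul_neg, one_mul]
    rw [sub_neg_eq_add, ← mul_assoc, hm]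
  -- inner sum for good x
  have hinner : ∀ x : F, x ≠ 0 → x - 4 ≠ 0 →
      (∑ z ∈ Finset.univ.filter (fun z : F => z ≠ 0),
        χ z * lam (x ^ 3 + x ^ 2 * z - 4 * x * z))
      = (χ (x ^ 2 / (x - 4)) * lam (x ^ 3)) * ∑ u : F, χ u * lam (1 + u) := by
    intro x hx0 hx4
    set c : F := x ^ 2 / (x - 4) with hcdef
    have hc : c ≠ 0 := div_ne_zero (pow_ne_zero _ hx0) hx4
    rw [Finset.sum_filter_of_ne (fun z _ hf => by
      intro hz; apply hf; rw [hz, hχ0, zero_mul]), mul_sum]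
    refine (Fintype.sum_bijective (fun u : F => c * u) (mulLeft_bijective₀ c hc) _ _
      fun u => ?_).symm
    have harg : x ^ 3 + x ^ 2 * (c * u) - 4 * x * (c * u) = x ^ 3 * (1 + u) := by
      have key : c * (x - 4) = x ^ 2 := by rw [hcdef]; exact div_mul_cancel₀ _ hx4
      linear_combination (x * u) * key
    rw [harg, map_mul χ, map_mul lam]
    ring
  -- pointwise description of the inner sum, valid for ALL x
  have hpt : ∀ x : F,
      (∑ z ∈ Finset.univ.filter (fun z : F => z ≠ 0),
        χ z * lam (x ^ 3 + x ^ 2 * z - 4 * x * z))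
      = (χ (-1) * jacobiSum χ lam) * (lam x * (χ x) ^ 2 * χ⁻¹ (x - 4)) := by
    intro x
    by_cases hx0 : x = 0
    · subst hx0
      simp [hlam0]
    by_cases hx4 : x - 4 = 0
    · have hx : x = (4 : F) := by rwa [sub_eq_zero] at hx4
      subst hx
      have harg : ∀ z : F, (4:F) ^ 3 + 4 ^ 2 * z - 4 * 4 * z = 64 := fun z => by ring
      have h64 : lam (64 : F) = 1 := by
        have h : (64 : F) = 8 ^ 2 := by norm_num
        rw [h, map_pow, ← lam.pow_apply' two_ne_zero, hl2, MulChar.one_apply (isUnit_iff_ne_zero.mpr h8)]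
      have hrhs : χ⁻¹ ((4:F) - 4) = 0 := by
        rw [sub_self]; exact MulChar.map_zero χ⁻¹
      simp only [harg, h64, mul_one, hrhs, mul_zero]
      rw [Finset.sum_filter_of_ne (fun z _ hf => by
        intro hz; rw [hz] at hf; exact hf hχ0)]
      exact MulChar.sum_eq_zero_of_ne_one hχ1
    · rw [hinner x hx0 hx4, hS]
      have e1 : χ (x ^ 2 / (x - 4)) = (χ x) ^ 2 * χ⁻¹ (x - 4) := by
        rw [div_eq_mul_inv, map_mul, map_pow, MulChar.inv_apply']
      have e2 : lam (x ^ 3) = lam x := by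
        rw [show x ^ 3 = x * x ^ 2 by ring, map_mul, map_pow,
          ← lam.pow_apply' two_ne_zero, hl2,
          MulChar.one_apply (isUnit_iff_ne_zero.mpr hx0), mul_one]
      rw [e1, e2]
      ring
  have hT : ∑ x : F, lam x * (χ x) ^ 2 * χ⁻¹ (x - 4)
      = (lam 4 * (χ 4) ^ 2 * χ⁻¹ (-4)) * jacobiSum (lam * χ ^ 2) χ⁻¹ := by
    rw [jacobiSum, mul_sum]
    refine (Fintype.sum_bijective (fun s : F => 4 * s) (mulLeft_bijective₀ 4 h4) _ _
      fun s => ?_).symm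
    have h1 : (4:F) * s - 4 = (-4) * (1 - s) := by ring
    rw [h1, map_mul lam, map_mul χ, map_mul χ⁻¹, MulChar.mul_apply,
      χ.pow_apply' two_ne_zero]
    ring
  have hB : Bsum F ⇑χ ⇑lam
      = (χ (-1) * jacobiSum χ lam) * ((lam 4 * (χ 4) ^ 2 * χ⁻¹ (-4)) * jacobiSum (lam * χ ^ 2) χ⁻¹) := by
    rw [Bsum]
    simp only [hpt]
    rw [← mul_sum, hT]
  rw [hB]
  simp only [norm_mul, norm_pow]
  rw [abs_mulChar_eq_one χ (neg_ne_zero.mpr one_ne_zero),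
    abs_mulChar_eq_one lam h4, abs_mulChar_eq_one χ h4,
    abs_mulChar_eq_one χ⁻¹ (neg_ne_zero.mpr h4),
    abs_jacobiSum_eq χ lam hχ1 hl1 hχl,
    abs_jacobiSum_eq (lam * χ ^ 2) χ⁻¹ hlc2 hχinv hlc1]
  rw [one_mul, one_pow, one_mul, mul_one, one_mul]
  exact Real.mul_self_sqrt (Nat.cast_nonneg _)
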